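/- Let T₀ ≥ 1 and let θ : [T₀,∞) → [0,∞) be continuously differentiable with 0 < limsup_{t→∞} tθ(t) < ∞ and θ'(t) ≥ -(3/2)θ(t)² - t^{-2.2} for all t > T₀. Then liminf_{t→∞} tθ(t) > 0. -/

import Mathlib

open Filter Set Real

/-- If `θ ≥ 0` is C¹ on `[T₀,∞)` with `0 < limsup tθ(t) < ∞` and
`θ' ≥ -(3/2)θ² - t^{-2.2}`, then `liminf tθ(t) > 0`. -/
theorem liminf_positive (T₀ : ℝ) (hT₀ : 1 ≤ T₀) (θ : ℝ → ℝ)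
    (hθ0 : ∀ t ≥ T₀, 0 ≤ θ t)
    (hC1 : ContDiffOn ℝ 1 θ (Set.Ici T₀))
    (hbdd : ∃ M : ℝ, ∀ᶠ t in Filter.atTop, t * θ t ≤ M)
    (hlimsup : 0 < Filter.limsup (fun t => t * θ t) Filter.atTop)
    (hdiff : ∀ t > T₀, -(3 / 2) * (θ t) ^ 2 - t ^ (-(2.2:ℝ)) ≤ deriv θ t) :
    0 < Filter.liminf (fun t => t * θ t) Filter.atTop := by
  obtain ⟨M, hM⟩ := hbdd
  have hbddle : IsBoundedUnder (· ≤ ·) atTop (fun t => t * θ t) := ⟨M, hM⟩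
  have hpos0 : ∀ᶠ t in atTop, 0 ≤ t * θ t := by
    filter_upwards [eventually_ge_atTop T₀] with t ht
    exact mul_nonneg (by linarith) (hθ0 t ht)
  have hbddge : IsBoundedUnder (· ≥ ·) atTop (fun t => t * θ t) := ⟨0, hpos0⟩
  set L := limsup (fun t => t * θ t) atTop with hL
  set c : ℝ := min (L / 2) (1 / 2) with hc
  have hc0 : 0 < c := lt_min (by linarith) (by norm_num)
  have hc2 : c ≤ 1 / 2 := min_le_right _ _
  have hcL : c < L := lt_of_le_of_lt (min_le_left _ _) (by linarith)
  have hfreq : ∃ᶠ t in atTop, c < t * θ t :=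
    frequently_lt_of_lt_limsup hbddge.isCoboundedUnder_le hcL
  -- threshold
  set T₂ : ℝ := (9 / c) ^ (5 : ℝ) with hT₂
  have h9c : (0:ℝ) < 9 / c := by positivity
  have hT₂pos : 0 < T₂ := rpow_pos_of_pos h9c _
  -- key smallness: for t ≥ T₂, t^(-0.2) ≤ c/9
  have hsmall : ∀ t : ℝ, T₂ ≤ t → t ^ (-(0.2:ℝ)) ≤ c / 9 := by
    intro t ht
    have h1 : t ^ (-(0.2:ℝ)) ≤ T₂ ^ (-(0.2:ℝ)) :=
      rpow_le_rpow_of_nonpos hT₂pos ht (by norm_num)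
    have h2 : T₂ ^ (-(0.2:ℝ)) = c / 9 := by
      rw [hT₂, ← rpow_mul h9c.le]
      norm_num
      rw [rpow_neg_one, inv_div]
    rw [h2] at h1; exact h1
  -- pick t₁
  obtain ⟨t₁, hct₁, ht₁⟩ := (hfreq.and_eventually (eventually_ge_atTop (max (T₀ + 1) T₂))).exists
  have ht₁T₀ : T₀ + 1 ≤ t₁ := le_trans (le_max_left _ _) ht₁
  have ht₁T₂ : T₂ ≤ t₁ := le_trans (le_max_right _ _) ht₁
  have ht₁pos : 0 < t₁ := by linarith
  -- the barrier
  set φ : ℝ → ℝ := fun t => c / t - t ^ (-(1.2:ℝ)) with hφ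
  set φ' : ℝ → ℝ := fun t => -c / t ^ 2 + 1.2 * t ^ (-(2.2:ℝ)) with hφ'
  have hφderiv : ∀ t : ℝ, 0 < t → HasDerivAt φ (φ' t) t := by
    intro t ht
    have h1 : HasDerivAt (fun x : ℝ => c / x) (-c / t ^ 2) t := by
      have h := (hasDerivAt_inv ht.ne').const_mul c
      simp only [mul_neg, ← div_eq_mul_inv, ← neg_div] at h
      exact h
    have h2 : HasDerivAt (fun x : ℝ => x ^ (-(1.2:ℝ)))
        ((-(1.2:ℝ)) * t ^ ((-(1.2:ℝ)) - 1)) t :=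
      Real.hasDerivAt_rpow_const (Or.inl ht.ne')
    have h3 := h1.sub h2
    refine h3.congr_deriv ?_
    simp only [hφ']
    rw [show (-(1.2:ℝ)) - 1 = -(2.2:ℝ) by norm_num]
    ring
  -- decompositions
  have hdec12 : ∀ t : ℝ, 0 < t → t ^ (-(1.2:ℝ)) = t ^ (-(0.2:ℝ)) * t⁻¹ := by
    intro t ht
    rw [show (-(1.2:ℝ)) = (-(0.2:ℝ)) + (-1:ℝ) by norm_num, rpow_add ht, rpow_neg_one]
  have hdec22 : ∀ t : ℝ, 0 < t → t ^ (-(2.2:ℝ)) = t ^ (-(0.2:ℝ)) * (t ^ 2)⁻¹ := by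
    intro t ht
    rw [show (-(2.2:ℝ)) = (-(0.2:ℝ)) + (-2:ℝ) by norm_num, rpow_add ht]
    congr 1
    rw [show (-2:ℝ) = -((2:ℕ):ℝ) by norm_num, rpow_neg ht.le, rpow_natCast]
  -- comparison: θ ≥ φ on [t₁, ∞)
  have hcomp : ∀ t : ℝ, t₁ ≤ t → φ t ≤ θ t := by
    intro b hb
    have key : ∀ ⦃x⦄, x ∈ Icc t₁ b → φ x ≤ θ x := by
      apply image_le_of_deriv_right_lt_deriv_boundary'
        (f := φ) (f' := φ') (B := θ) (B' := deriv θ)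
      · -- φ continuous on Icc
        apply ContinuousOn.sub
        · exact continuousOn_const.div continuousOn_id (fun x hx =>
            (lt_of_lt_of_le ht₁pos hx.1).ne')
        · intro x hx
          exact (Real.continuousAt_rpow_const x _
            (Or.inl (lt_of_lt_of_le ht₁pos hx.1).ne')).continuousWithinAt
      · intro x hx
        exact (hφderiv x (lt_of_lt_of_le ht₁pos hx.1)).hasDerivWithinAt
      · -- φ t₁ ≤ θ t₁
        have h1 : c / t₁ ≤ θ t₁ := by
          rw [div_le_iff₀ ht₁pos]
          nlinarith [hct₁]
        have h2 : 0 < t₁ ^ (-(1.2:ℝ)) := rpow_pos_of_pos ht₁pos _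
        simp only [hφ]; linarith
      · -- θ continuous on Icc
        exact hC1.continuousOn.mono (fun x hx => le_trans (by linarith) hx.1)
      · -- θ has derivative
        intro x hx
        have hxT₀ : T₀ < x := by have := hx.1; linarith
        have hdiffat : DifferentiableAt ℝ θ x :=
          (hC1.differentiableOn one_ne_zero).differentiableAt (Ici_mem_nhds hxT₀)
        exact hdiffat.hasDerivAt.hasDerivWithinAt
      · -- bound at touching points
        intro x hx heq
        have hxT₀ : T₀ < x := by have := hx.1; linarith
        have hx0 : 0 < x := by linarith
        have hxT₂ : T₂ ≤ x := le_trans ht₁T₂ hx.1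
        have hs := hsmall x hxT₂
        have hs0 : 0 < x ^ (-(0.2:ℝ)) := rpow_pos_of_pos hx0 _
        refine lt_of_lt_of_le ?_ (hdiff x hxT₀)
        rw [← heq]
        simp only [hφ', hφ]
        rw [hdec12 x hx0, hdec22 x hx0]
        set s := x ^ (-(0.2:ℝ)) with hsdef
        have hx2 : (0:ℝ) < x ^ 2 := by positivity
        have e1 : -c / x ^ 2 + 1.2 * (s * (x ^ 2)⁻¹) = (-c + 1.2 * s) / x ^ 2 := by
          field_simp
        have e2 : -(3/2) * (c / x - s * x⁻¹) ^ 2 - s * (x ^ 2)⁻¹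
            = (-(3/2) * (c - s) ^ 2 - s) / x ^ 2 := by
          field_simp
        rw [e1, e2, div_lt_div_iff_of_pos_right hx2]
        nlinarith [sq_nonneg (c - s), sq_nonneg s]
    exact key ⟨hb, le_rfl⟩
  -- conclude
  have hev : ∀ᶠ t in atTop, c / 2 ≤ t * θ t := by
    filter_upwards [eventually_ge_atTop t₁] with t ht
    have ht0 : 0 < t := lt_of_lt_of_le ht₁pos ht
    have h1 := hcomp t ht
    have hs := hsmall t (le_trans ht₁T₂ ht)
    have h2 : t * φ t = c - t ^ (-(0.2:ℝ)) := by
      simp only [hφ]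
      rw [hdec12 t ht0]
      field_simp
    have h3 : t * φ t ≤ t * θ t := by
      exact mul_le_mul_of_nonneg_left h1 ht0.le
    rw [h2] at h3
    linarith
  have : c / 2 ≤ liminf (fun t => t * θ t) atTop :=
    le_liminf_of_le hbddle.isCoboundedUnder_ge hev
  linarith
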